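/- Let R = ⨁_{n≥0} R^n be a locally finite connected graded K-algebra (R^0 = K, each R^d finite-dimensional), and let ψ be a K-algebra automorphism of R such that ψ(R^d) ⊆ R^{≥d} := ⨁_{n≥d} R^n for all d ≥ 0. Define ψ_0 : R → R by letting ψ_0(x) be the degree-d component of ψ(x) for x ∈ R^d, extended linearly. Then ψ_0 is a graded K-algebra automorphism of R, and ψ_0^{-1} ∘ ψ is unipotent, i.e., (ψ_0^{-1}ψ)(x) − x ∈ R^{≥ m+1} for all x ∈ R^m and all m ≥ 0. -/

import Mathlib

namespace Statement11Aux

open DirectSum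

variable {K R : Type*} [Field K] [Ring R] [Algebra K R] (𝒜 : ℕ → Submodule K R)

/-- The filtration `R^{≥ m}`. -/
def F (m : ℕ) : Submodule K R := ⨆ n : ℕ, ⨆ (_ : m ≤ n), 𝒜 n

theorem mem_F_of_mem {m n : ℕ} (h : m ≤ n) {x : R} (hx : x ∈ 𝒜 n) : x ∈ F 𝒜 m :=
  Submodule.mem_iSup_of_mem n (Submodule.mem_iSup_of_mem h hx)

theorem F_mono {m n : ℕ} (h : m ≤ n) : F 𝒜 n ≤ F 𝒜 m :=
  iSup₂_le fun k hk => fun x hx => mem_F_of_mem 𝒜 (h.trans hk) hx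

variable [GradedAlgebra 𝒜]

theorem mem_F_iff {m : ℕ} {x : R} :
    x ∈ F 𝒜 m ↔ ∀ i < m, (DirectSum.decompose 𝒜 x i : R) = 0 := by
  constructor
  · intro hx
    refine Submodule.iSup_induction _ (motive := fun y => ∀ i < m, (DirectSum.decompose 𝒜 y i : R) = 0)
      hx ?_ ?_ ?_
    · intro n y hy i hi
      by_cases hmn : m ≤ n
      · rw [iSup_pos hmn] at hy
        exact DirectSum.decompose_of_mem_ne 𝒜 hy (Nat.ne_of_gt (lt_of_lt_of_le hi hmn))
      · rw [iSup_neg hmn] at hy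
        simp_all
    · intro i _; simp
    · intro a b ha hb i hi
      rw [DirectSum.decompose_add, DirectSum.add_apply, Submodule.coe_add, ha i hi, hb i hi,
        add_zero]
  · intro h
    classical
    rw [← DirectSum.sum_support_decompose 𝒜 x]
    refine Submodule.sum_mem _ fun i hi => ?_
    by_cases him : i < m
    · rw [h i him]; exact zero_mem _
    · exact mem_F_of_mem 𝒜 (not_lt.1 him) (SetLike.coe_mem _)

theorem F_mul_mem {m n : ℕ} {u v : R} (hu : u ∈ F 𝒜 m) (hv : v ∈ F 𝒜 n) :
    u * v ∈ F 𝒜 (m + n) := by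
  have key : ∀ k, m ≤ k → ∀ u' ∈ 𝒜 k, u' * v ∈ F 𝒜 (m + n) := by
    intro k hk u' hu'
    have h2 : F 𝒜 n ≤ (F 𝒜 (m + n)).comap (LinearMap.mulLeft K u') :=
      iSup₂_le fun l hl => fun w hw =>
        mem_F_of_mem 𝒜 (add_le_add hk hl) (SetLike.mul_mem_graded hu' hw)
    exact h2 hv
  have h1 : F 𝒜 m ≤ (F 𝒜 (m + n)).comap (LinearMap.mulRight K v) :=
    iSup₂_le fun k hk => fun u' hu' => key k hk u' hu'
  exact h1 hu


variable (ψ : R ≃ₐ[K] R)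

theorem psi_F (hψ : ∀ (d : ℕ), ∀ x ∈ 𝒜 d, ψ x ∈ ⨆ n : ℕ, ⨆ (_ : d ≤ n), 𝒜 n)
    (m : ℕ) : ∀ x ∈ F 𝒜 m, ψ x ∈ F 𝒜 m := by
  have h : F 𝒜 m ≤ (F 𝒜 m).comap ψ.toLinearMap :=
    iSup₂_le fun n hn => fun x hx => F_mono 𝒜 hn (hψ n x hx)
  exact fun x hx => h hx

theorem Fquot_finite (hlf : ∀ d : ℕ, Module.Finite K (𝒜 d)) (m : ℕ) :
    Module.Finite K (R ⧸ F 𝒜 m) := by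
  classical
  set G : Submodule K R := ⨆ n ∈ Finset.range m, 𝒜 n with hGdef
  have hG : Module.Finite K G := by
    rw [Module.Finite.iff_fg]
    exact Submodule.fg_biSup (Finset.range m) _ fun i _ => Module.Finite.iff_fg.mp (hlf i)
  refine Module.Finite.of_surjective ((F 𝒜 m).mkQ ∘ₗ G.subtype) ?_
  intro y
  obtain ⟨x, rfl⟩ := (F 𝒜 m).mkQ_surjective y
  have hmem : (∑ i ∈ Finset.range m, (DirectSum.decompose 𝒜 x i : R)) ∈ G :=
    Submodule.sum_mem _ fun i hi =>
      Submodule.mem_iSup_of_mem i (Submodule.mem_iSup_of_mem hi (SetLike.coe_mem _))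
  refine ⟨⟨_, hmem⟩, ?_⟩
  have hdiff : x - ∑ i ∈ Finset.range m, (DirectSum.decompose 𝒜 x i : R) ∈ F 𝒜 m := by
    rw [mem_F_iff]
    intro i hi
    rw [DirectSum.decompose_sub]
    have hsum : (DirectSum.decompose 𝒜 (∑ j ∈ Finset.range m,
        (DirectSum.decompose 𝒜 x j : R)) i : R) = (DirectSum.decompose 𝒜 x i : R) := by
      rw [DirectSum.decompose_sum, DFinsupp.finset_sum_apply, Submodule.coe_sum]
      rw [Finset.sum_eq_single i]
      · exact DirectSum.decompose_of_mem_same 𝒜 (SetLike.coe_mem _)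
      · intro j _ hji
        exact DirectSum.decompose_of_mem_ne 𝒜 (SetLike.coe_mem _) hji
      · intro h; exact absurd (Finset.mem_range.2 hi) h
    rw [DirectSum.sub_apply, Submodule.coe_sub, hsum, sub_self]
  show (F 𝒜 m).mkQ _ = (F 𝒜 m).mkQ x
  rw [Submodule.mkQ_apply, Submodule.mkQ_apply]
  exact (Submodule.Quotient.eq (F 𝒜 m)).2 (by simpa using (F 𝒜 m).neg_mem hdiff)

theorem psi_inv_F (hlf : ∀ d : ℕ, Module.Finite K (𝒜 d))
    (hψ : ∀ (d : ℕ), ∀ x ∈ 𝒜 d, ψ x ∈ ⨆ n : ℕ, ⨆ (_ : d ≤ n), 𝒜 n)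
    (m : ℕ) : ∀ x : R, ψ x ∈ F 𝒜 m → x ∈ F 𝒜 m := by
  have hfin : Module.Finite K (R ⧸ F 𝒜 m) := Fquot_finite 𝒜 hlf m
  set q : (R ⧸ F 𝒜 m) →ₗ[K] (R ⧸ F 𝒜 m) :=
    (F 𝒜 m).mapQ (F 𝒜 m) ψ.toLinearMap
      (show F 𝒜 m ≤ (F 𝒜 m).comap ψ.toLinearMap from fun x hx => psi_F 𝒜 ψ hψ m x hx) with hq
  have hqs : Function.Surjective q := by
    intro y
    obtain ⟨x, rfl⟩ := (F 𝒜 m).mkQ_surjective y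
    obtain ⟨z, rfl⟩ := ψ.surjective x
    exact ⟨(F 𝒜 m).mkQ z, by simp [hq, Submodule.mapQ_apply]⟩
  have hqi : Function.Injective q := LinearMap.injective_iff_surjective.mpr hqs
  intro x hx
  have h0 : q ((F 𝒜 m).mkQ x) = 0 := by
    rw [hq]
    rw [Submodule.mkQ_apply, Submodule.mapQ_apply]
    exact (Submodule.Quotient.mk_eq_zero _).2 hx
  have := hqi (a₁ := (F 𝒜 m).mkQ x) (a₂ := 0) (by simpa using h0)
  exact (Submodule.Quotient.mk_eq_zero _).1 (by simpa using this)


/-- The degree-preserving component of `ψ` on `𝒜 d`. -/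
noncomputable def phi (d : ℕ) : 𝒜 d →ₗ[K] 𝒜 d :=
  (DirectSum.component K ℕ (fun i => 𝒜 i) d) ∘ₗ
    (DirectSum.decomposeAlgEquiv 𝒜).toLinearMap ∘ₗ ψ.toLinearMap ∘ₗ (𝒜 d).subtype

theorem phi_apply (d : ℕ) (x : 𝒜 d) :
    phi 𝒜 ψ d x = DirectSum.decompose 𝒜 (ψ (x : R)) d := rfl

theorem phi_inj (hlf : ∀ d : ℕ, Module.Finite K (𝒜 d))
    (hψ : ∀ (d : ℕ), ∀ x ∈ 𝒜 d, ψ x ∈ ⨆ n : ℕ, ⨆ (_ : d ≤ n), 𝒜 n)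
    (d : ℕ) : Function.Injective (phi 𝒜 ψ d) := by
  rw [injective_iff_map_eq_zero]
  intro x hx
  have hx' : (DirectSum.decompose 𝒜 (ψ (x : R)) d : R) = 0 := by
    rw [← phi_apply 𝒜 ψ d x, hx, ZeroMemClass.coe_zero]
  have h1 : ψ (x : R) ∈ F 𝒜 (d + 1) := by
    rw [mem_F_iff]
    intro i hi
    rcases Nat.lt_succ_iff_lt_or_eq.1 hi with hlt | rfl
    · exact (mem_F_iff 𝒜).mp (hψ d x x.2) i hlt
    · exact hx'
  have h2 : (x : R) ∈ F 𝒜 (d + 1) := psi_inv_F 𝒜 ψ hlf hψ (d + 1) _ h1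
  have h3 : (x : R) = 0 := by
    have := (mem_F_iff 𝒜).mp h2 d (Nat.lt_succ_self d)
    rwa [DirectSum.decompose_of_mem_same 𝒜 x.2] at this
  exact Subtype.ext h3

theorem phi_bij (hlf : ∀ d : ℕ, Module.Finite K (𝒜 d))
    (hψ : ∀ (d : ℕ), ∀ x ∈ 𝒜 d, ψ x ∈ ⨆ n : ℕ, ⨆ (_ : d ≤ n), 𝒜 n)
    (d : ℕ) : Function.Bijective (phi 𝒜 ψ d) := by
  have := hlf d
  exact ⟨phi_inj 𝒜 ψ hlf hψ d,
    LinearMap.injective_iff_surjective.mp (phi_inj 𝒜 ψ hlf hψ d)⟩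

/-- The per-degree linear equivalence. -/
noncomputable def e (hlf : ∀ d : ℕ, Module.Finite K (𝒜 d))
    (hψ : ∀ (d : ℕ), ∀ x ∈ 𝒜 d, ψ x ∈ ⨆ n : ℕ, ⨆ (_ : d ≤ n), 𝒜 n)
    (d : ℕ) : 𝒜 d ≃ₗ[K] 𝒜 d :=
  LinearEquiv.ofBijective (phi 𝒜 ψ d) (phi_bij 𝒜 ψ hlf hψ d)

/-- The candidate degree-zero component as a linear equivalence. -/
noncomputable def Psi (hlf : ∀ d : ℕ, Module.Finite K (𝒜 d))
    (hψ : ∀ (d : ℕ), ∀ x ∈ 𝒜 d, ψ x ∈ ⨆ n : ℕ, ⨆ (_ : d ≤ n), 𝒜 n) :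
    R ≃ₗ[K] R :=
  (DirectSum.decomposeAlgEquiv 𝒜).toLinearEquiv.trans
    ((DFinsupp.mapRange.linearEquiv (e 𝒜 ψ hlf hψ)).trans
      (DirectSum.decomposeAlgEquiv 𝒜).symm.toLinearEquiv)

theorem Psi_apply_of_mem (hlf : ∀ d : ℕ, Module.Finite K (𝒜 d))
    (hψ : ∀ (d : ℕ), ∀ x ∈ 𝒜 d, ψ x ∈ ⨆ n : ℕ, ⨆ (_ : d ≤ n), 𝒜 n)
    {d : ℕ} {x : R} (hx : x ∈ 𝒜 d) :
    Psi 𝒜 ψ hlf hψ x = (DirectSum.decompose 𝒜 (ψ x) d : R) := by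
  classical
  have h1 : DirectSum.decompose 𝒜 x = DirectSum.of (fun i => 𝒜 i) d ⟨x, hx⟩ :=
    DirectSum.decompose_of_mem 𝒜 hx
  show (DirectSum.decomposeAlgEquiv 𝒜).symm
      (DFinsupp.mapRange.linearEquiv (e 𝒜 ψ hlf hψ)
        (DirectSum.decomposeAlgEquiv 𝒜 x)) = _
  rw [DirectSum.decomposeAlgEquiv_apply, h1]
  have h2 : DFinsupp.mapRange.linearEquiv (e 𝒜 ψ hlf hψ)
      (DirectSum.of (fun i => 𝒜 i) d ⟨x, hx⟩) =
      DirectSum.of (fun i => 𝒜 i) d (e 𝒜 ψ hlf hψ d ⟨x, hx⟩) := by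
    exact DFinsupp.mapRange_single (f := fun i => e 𝒜 ψ hlf hψ i) (hf := fun i => map_zero _)
  rw [h2]
  have h3 : (DirectSum.decomposeAlgEquiv 𝒜).symm
      (DirectSum.of (fun i => 𝒜 i) d (e 𝒜 ψ hlf hψ d ⟨x, hx⟩)) =
      ((e 𝒜 ψ hlf hψ d ⟨x, hx⟩ : 𝒜 d) : R) := by
    simpa using DirectSum.decompose_symm_of 𝒜 (e 𝒜 ψ hlf hψ d ⟨x, hx⟩)
  rw [h3]
  rfl


theorem sub_decompose_mem (a : ℕ) {u : R} (hu : u ∈ F 𝒜 a) :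
    u - (DirectSum.decompose 𝒜 u a : R) ∈ F 𝒜 (a + 1) := by
  rw [mem_F_iff]
  intro i hi
  rw [DirectSum.decompose_sub, DirectSum.sub_apply, Submodule.coe_sub]
  rcases Nat.lt_succ_iff_lt_or_eq.1 hi with hlt | rfl
  · rw [(mem_F_iff 𝒜).mp hu i hlt,
      DirectSum.decompose_of_mem_ne 𝒜 (SetLike.coe_mem _) (Nat.ne_of_gt hlt), sub_zero]
  · rw [DirectSum.decompose_of_mem_same 𝒜 (SetLike.coe_mem _), sub_self]

theorem decompose_mul_top {a b : ℕ} {u v : R} (hu : u ∈ F 𝒜 a) (hv : v ∈ F 𝒜 b) :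
    (DirectSum.decompose 𝒜 (u * v) (a + b) : R) =
      (DirectSum.decompose 𝒜 u a : R) * (DirectSum.decompose 𝒜 v b : R) := by
  set ua : R := (DirectSum.decompose 𝒜 u a : R) with hua
  set vb : R := (DirectSum.decompose 𝒜 v b : R) with hvb
  have huam : ua ∈ 𝒜 a := SetLike.coe_mem _
  have hvbm : vb ∈ 𝒜 b := SetLike.coe_mem _
  have hsplit : u * v = ua * vb + (ua * (v - vb) + (u - ua) * v) := by noncomm_ring
  have h2 : (DirectSum.decompose 𝒜 (ua * (v - vb)) (a + b) : R) = 0 :=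
    (mem_F_iff 𝒜).mp
      (F_mul_mem 𝒜 (mem_F_of_mem 𝒜 le_rfl huam) (sub_decompose_mem 𝒜 b hv))
      (a + b) (by omega)
  have h3 : (DirectSum.decompose 𝒜 ((u - ua) * v) (a + b) : R) = 0 :=
    (mem_F_iff 𝒜).mp (F_mul_mem 𝒜 (sub_decompose_mem 𝒜 a hu) hv) (a + b) (by omega)
  rw [hsplit, DirectSum.decompose_add, DirectSum.add_apply, Submodule.coe_add,
    DirectSum.decompose_add, DirectSum.add_apply, Submodule.coe_add, h2, h3, add_zero, add_zero,
    DirectSum.decompose_of_mem_same 𝒜 (SetLike.mul_mem_graded huam hvbm)]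

theorem Psi_one (hlf : ∀ d : ℕ, Module.Finite K (𝒜 d))
    (hψ : ∀ (d : ℕ), ∀ x ∈ 𝒜 d, ψ x ∈ ⨆ n : ℕ, ⨆ (_ : d ≤ n), 𝒜 n) :
    Psi 𝒜 ψ hlf hψ 1 = 1 := by
  rw [Psi_apply_of_mem 𝒜 ψ hlf hψ (SetLike.one_mem_graded 𝒜), map_one,
    DirectSum.decompose_of_mem_same 𝒜 (SetLike.one_mem_graded 𝒜)]

theorem Psi_mul (hlf : ∀ d : ℕ, Module.Finite K (𝒜 d))
    (hψ : ∀ (d : ℕ), ∀ x ∈ 𝒜 d, ψ x ∈ ⨆ n : ℕ, ⨆ (_ : d ≤ n), 𝒜 n)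
    (x y : R) : Psi 𝒜 ψ hlf hψ (x * y) = Psi 𝒜 ψ hlf hψ x * Psi 𝒜 ψ hlf hψ y := by
  have hhom : ∀ (dx : ℕ) (x : 𝒜 dx) (dy : ℕ) (y : 𝒜 dy),
      Psi 𝒜 ψ hlf hψ ((x : R) * (y : R)) =
        Psi 𝒜 ψ hlf hψ (x : R) * Psi 𝒜 ψ hlf hψ (y : R) := by
    intro dx x dy y
    rw [Psi_apply_of_mem 𝒜 ψ hlf hψ x.2, Psi_apply_of_mem 𝒜 ψ hlf hψ y.2,
      Psi_apply_of_mem 𝒜 ψ hlf hψ (SetLike.mul_mem_graded x.2 y.2), map_mul]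
    exact decompose_mul_top 𝒜 (hψ dx x x.2) (hψ dy y y.2)
  induction x using DirectSum.Decomposition.inductionOn 𝒜 with
  | zero => simp
  | add a b ha hb => rw [add_mul, map_add, ha, hb, map_add, add_mul]
  | homogeneous xh =>
    induction y using DirectSum.Decomposition.inductionOn 𝒜 with
    | zero => simp
    | add a b ha hb => rw [mul_add, map_add, ha, hb, map_add, mul_add]
    | homogeneous yh => exact hhom _ xh _ yh
end Statement11Aux

/-- Let `R` be a locally finite connected graded `K`-algebra and `ψ`
an automorphism with `ψ(R^d) ⊆ R^{≥d}` for all `d`.  Then the degree-zero component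
`ψ₀` of `ψ` is a graded algebra automorphism and `ψ₀⁻¹ ∘ ψ` is unipotent. -/
theorem degree_zero_component_is_graded_automorphism {K R : Type*} [Field K] [Ring R]
    [Algebra K R] (𝒜 : ℕ → Submodule K R) [GradedAlgebra 𝒜]
    (hconn : 𝒜 0 = 1)
    (hlf : ∀ d : ℕ, Module.Finite K (𝒜 d))
    (ψ : R ≃ₐ[K] R)
    (hψ : ∀ (d : ℕ), ∀ x ∈ 𝒜 d, ψ x ∈ ⨆ n : ℕ, ⨆ (_ : d ≤ n), 𝒜 n) :
    ∃ ψ₀ : R ≃ₐ[K] R,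
      (∀ (d : ℕ), ∀ x ∈ 𝒜 d, ψ₀ x = (DirectSum.decompose 𝒜 (ψ x) d : R)) ∧
      (∀ (d : ℕ), ∀ x ∈ 𝒜 d, ψ₀ x ∈ 𝒜 d) ∧
      (∀ (m : ℕ), ∀ x ∈ 𝒜 m,
        ψ₀.symm (ψ x) - x ∈ ⨆ n : ℕ, ⨆ (_ : m + 1 ≤ n), 𝒜 n) := by
  classical
  set ψ₀ : R ≃ₐ[K] R := AlgEquiv.ofLinearEquiv (Statement11Aux.Psi 𝒜 ψ hlf hψ)
    (Statement11Aux.Psi_one 𝒜 ψ hlf hψ) (Statement11Aux.Psi_mul 𝒜 ψ hlf hψ) with hψ₀def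
  have happly : ∀ (d : ℕ), ∀ x ∈ 𝒜 d, ψ₀ x = (DirectSum.decompose 𝒜 (ψ x) d : R) := by
    intro d x hx
    rw [hψ₀def, AlgEquiv.ofLinearEquiv_apply]
    exact Statement11Aux.Psi_apply_of_mem 𝒜 ψ hlf hψ hx
  refine ⟨ψ₀, happly, ?_, ?_⟩
  · intro d x hx
    rw [happly d x hx]
    exact SetLike.coe_mem _
  · intro m x hx
    show ψ₀.symm (ψ x) - x ∈ Statement11Aux.F 𝒜 (m + 1)
    have hF : ψ x - ψ₀ x ∈ Statement11Aux.F 𝒜 (m + 1) := by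
      rw [happly m x hx]
      exact Statement11Aux.sub_decompose_mem 𝒜 m (hψ m x hx)
    have hsymm : ∀ y ∈ Statement11Aux.F 𝒜 (m + 1), ψ₀.symm y ∈ Statement11Aux.F 𝒜 (m + 1) := by
      have h : Statement11Aux.F 𝒜 (m + 1) ≤
          (Statement11Aux.F 𝒜 (m + 1)).comap ψ₀.symm.toLinearMap := by
        refine iSup₂_le fun n hn => fun y hy => ?_
        obtain ⟨z, hz⟩ := (Statement11Aux.phi_bij 𝒜 ψ hlf hψ n).2 ⟨y, hy⟩
        have hz' : ψ₀ (z : R) = y := by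
          rw [happly n z z.2]
          exact congrArg Subtype.val hz
        have : ψ₀.symm y = (z : R) := by rw [← hz', AlgEquiv.symm_apply_apply]
        show ψ₀.symm y ∈ Statement11Aux.F 𝒜 (m + 1)
        rw [this]
        exact Statement11Aux.mem_F_of_mem 𝒜 hn z.2
      exact fun y hy => h hy
    have hkey : ψ₀.symm (ψ x) - x = ψ₀.symm (ψ x - ψ₀ x) := by
      rw [map_sub, AlgEquiv.symm_apply_apply]
    rw [hkey]
    exact hsymm _ hF
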